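/- Let M ∈ K^{m×m} be an invertible companion matrix, γ ∈ K^×, and E(γ) the rank-one matrix with rows (γ^{m-1},…,γ,1), (-γ^m,…,-γ), 0,…,0. Then for all integers r with 0 ≤ r ≤ m-2, Tr(M^r · E(γ)^t) = 0; i.e., E(γ) is trace-orthogonal to I, M, …, M^{m-2}. -/

import Mathlib

open Matrix

/-- The companion matrix of `x^m - a_m x^{m-1} - ⋯ - a_2 x - a_1`, whose bottom row is
`(a_1, …, a_m)` and which has ones on the superdiagonal. -/
def companionMat {K : Type*} [Field K] {m : ℕ} (a : Fin m → K) : Matrix (Fin m) (Fin m) K :=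
  Matrix.of fun i j => if (i : ℕ) + 1 = m then a j else if (j : ℕ) = (i : ℕ) + 1 then 1 else 0

/-- The rank-one matrix `E(γ)` with first row `(γ^{m-1}, …, γ, 1)`, second row
`(-γ^m, …, -γ², -γ)`, and all other rows zero. -/
def Egamma {K : Type*} [Field K] (m : ℕ) (γ : K) : Matrix (Fin m) (Fin m) K :=
  Matrix.of fun i j =>
    if (i : ℕ) = 0 then γ ^ (m - 1 - (j : ℕ))
    else if (i : ℕ) = 1 then -γ ^ (m - (j : ℕ)) else 0

lemma companion_pow_row {K : Type*} [Field K] {m : ℕ} (a : Fin m → K) :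
    ∀ r : ℕ, ∀ i j : Fin m, (i : ℕ) + r ≤ m - 1 →
      (companionMat a ^ r) i j = if (j : ℕ) = (i : ℕ) + r then 1 else 0 := by
  intro r
  induction r with
  | zero =>
    intro i j h
    simp [Matrix.one_apply, Fin.ext_iff, eq_comm]
  | succ r ih =>
    intro i j h
    have hm0 : 0 < m := i.pos
    have hk : (i : ℕ) + r < m := by omega
    rw [pow_succ, Matrix.mul_apply]
    rw [Finset.sum_eq_single (⟨(i : ℕ) + r, hk⟩ : Fin m)]
    · rw [ih i ⟨(i : ℕ) + r, hk⟩ (by omega), if_pos rfl, one_mul]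
      show (if ((i : ℕ) + r) + 1 = m then a j
          else if (j : ℕ) = ((i : ℕ) + r) + 1 then 1 else 0)
        = if (j : ℕ) = (i : ℕ) + (r + 1) then 1 else 0
      rw [if_neg (by omega), Nat.add_assoc]
    · intro b _ hb
      rw [ih i b (by omega), if_neg (by simpa [Fin.ext_iff] using hb), zero_mul]
    · intro hmem; exact absurd (Finset.mem_univ _) hmem

theorem stmt8 {K : Type*} [Field K] {m : ℕ} [NeZero m] (hm : 2 ≤ m)
    (a : Fin m → K) (ha : a 0 ≠ 0) (γ : K) (hγ : γ ≠ 0) :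
    ∀ r : ℕ, r ≤ m - 2 →
      Matrix.trace ((companionMat a) ^ r * (Egamma m γ)ᵀ) = 0 := by
  intro r hr
  set c : K := γ ^ (m - 1 - r) with hc
  have hrm : r < m := by omega
  rw [Matrix.trace]
  simp only [Matrix.diag_apply, Matrix.mul_apply, Matrix.transpose_apply]
  have key : ∀ i : Fin m,
      (∑ j, (companionMat a ^ r) i j * Egamma m γ i j)
        = (if (i : ℕ) = 0 then c else 0) + (if (i : ℕ) = 1 then -c else 0) := by
    intro i
    by_cases h0 : (i : ℕ) = 0
    · rw [if_pos h0, if_neg (by omega), add_zero]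
      rw [Finset.sum_eq_single (⟨r, hrm⟩ : Fin m)]
      · rw [companion_pow_row a r i _ (by omega), if_pos (by simp [h0]),
          one_mul, Egamma, Matrix.of_apply, if_pos h0]
      · intro b _ hb
        rw [companion_pow_row a r i b (by omega),
          if_neg (by simp only [h0, Nat.zero_add]; simpa [Fin.ext_iff] using hb), zero_mul]
      · intro hmem; exact absurd (Finset.mem_univ _) hmem
    · by_cases h1 : (i : ℕ) = 1
      · rw [if_neg h0, if_pos h1, zero_add]
        have hrm1 : 1 + r < m := by omega
        rw [Finset.sum_eq_single (⟨1 + r, hrm1⟩ : Fin m)]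
        · rw [companion_pow_row a r i _ (by omega), if_pos (by simp [h1]),
            one_mul, Egamma, Matrix.of_apply, if_neg (by omega), if_pos h1]
          have : m - (1 + r) = m - 1 - r := by omega
          rw [this]
        · intro b _ hb
          rw [companion_pow_row a r i b (by omega),
            if_neg (by simp only [h1]; simpa [Fin.ext_iff, Nat.add_comm] using hb), zero_mul]
        · intro hmem; exact absurd (Finset.mem_univ _) hmem
      · rw [if_neg h0, if_neg h1, add_zero]
        apply Finset.sum_eq_zero
        intro j _
        rw [Egamma, Matrix.of_apply, if_neg h0, if_neg h1, mul_zero]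
  rw [Finset.sum_congr rfl (fun i _ => key i), Finset.sum_add_distrib]
  rw [Finset.sum_eq_single (⟨0, by omega⟩ : Fin m), Finset.sum_eq_single (⟨1, by omega⟩ : Fin m)]
  · simp
  · intro b _ hb; rw [if_neg (by simpa [Fin.ext_iff] using hb)]
  · intro hmem; exact absurd (Finset.mem_univ _) hmem
  · intro b _ hb; rw [if_neg (fun h => hb (Fin.ext h))]
  · intro hmem; exact absurd (Finset.mem_univ _) hmem
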